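/- Let α > 2 and θ > 0 be sufficiently small. There exist constants c, C > 0 and N₀ ≥ 1 (depending on α and θ) such that for all N ≥ N₀, with γ = N^{-(α-1)/2 - θ}, and with D̃₁ = [γ/2, γ] × [-√(1+α) γ², √(1+α) γ²] and D̃₂ = [N, N+γ] × [√(1+α) N^{(α+2)/2}, √(1+α) N^{(α+2)/2} + γ²], the resonance function satisfies c N^{α-1} γ² ≤ |Ω_α(ξ₁,ξ₂,η₁,η₂)| ≤ C N^{α-1} γ² for all (ξ₁,η₁) ∈ D̃₁ and (ξ₂,η₂) ∈ D̃₂. -/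

import Mathlib

set_option maxHeartbeats 1000000
open Real Filter


/-- Dispersive part of the resonance function. -/
noncomputable def Omega1 (α ξ₁ ξ₂ : ℝ) : ℝ :=
  |ξ₁ + ξ₂| ^ α * (ξ₁ + ξ₂) - |ξ₁| ^ α * ξ₁ - |ξ₂| ^ α * ξ₂

/-- Full resonance function of the fractional KP-I equation:
`Ω_α(ξ₁,ξ₂,η₁,η₂) = Ω¹_α(ξ₁,ξ₂) - (η₁ξ₂ - η₂ξ₁)²/(ξ₁ξ₂(ξ₁+ξ₂))`. -/
noncomputable def Omega (α ξ₁ ξ₂ η₁ η₂ : ℝ) : ℝ :=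
  Omega1 α ξ₁ ξ₂ - (η₁ * ξ₂ - η₂ * ξ₁) ^ 2 / (ξ₁ * ξ₂ * (ξ₁ + ξ₂))

/-- `D̃₁ = [γ/2, γ] × [-√(1+α) γ², √(1+α) γ²]`. -/
noncomputable def Dtilde1 (α γ : ℝ) : Set (ℝ × ℝ) :=
  Set.Icc (γ / 2) γ ×ˢ
    Set.Icc (-(Real.sqrt (1 + α) * γ ^ 2)) (Real.sqrt (1 + α) * γ ^ 2)

/-- `D̃₂ = [N, N+γ] × [√(1+α) N^{(α+2)/2}, √(1+α) N^{(α+2)/2} + γ²]`. -/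
noncomputable def Dtilde2 (α N γ : ℝ) : Set (ℝ × ℝ) :=
  Set.Icc N (N + γ) ×ˢ
    Set.Icc (Real.sqrt (1 + α) * N ^ ((α + 2) / 2))
      (Real.sqrt (1 + α) * N ^ ((α + 2) / 2) + γ ^ 2)

/-- for `α > 2`, `θ > 0` sufficiently small and `γ = N^{-(α-1)/2-θ}`,
the resonance function is comparable to `N^{α-1} γ²` on `D̃₁ × D̃₂`. -/
lemma taylor_lb (α b h : ℝ) (hα : 0 ≤ α) (hb : 0 < b) (hh : 0 ≤ h) :
    b ^ (α + 1) + (α + 1) * b ^ α * h ≤ (b + h) ^ (α + 1) := by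
  have h1 : (-1:ℝ) ≤ h / b := by
    have : (0:ℝ) ≤ h / b := by positivity
    linarith
  have key := one_add_mul_self_le_rpow_one_add (s := h / b) h1 (p := α + 1) (by linarith)
  have hb1 : (1 + h / b) = (b + h) / b := by field_simp
  have e1 : (b + h) ^ (α + 1) = b ^ (α + 1) * (1 + h / b) ^ (α + 1) := by
    rw [hb1, Real.div_rpow (by linarith) hb.le, mul_div_cancel₀]
    exact (Real.rpow_pos_of_pos hb _).ne'
  have e2 : b ^ (α + 1) = b ^ α * b := Real.rpow_add_one hb.ne' α
  calc b ^ (α + 1) + (α + 1) * b ^ α * h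
      = b ^ (α + 1) * (1 + (α + 1) * (h / b)) := by rw [e2]; field_simp
    _ ≤ b ^ (α + 1) * (1 + h / b) ^ (α + 1) := by
        apply mul_le_mul_of_nonneg_left key (Real.rpow_pos_of_pos hb _).le
    _ = (b + h) ^ (α + 1) := e1.symm

lemma taylor_ub (α b h : ℝ) (hα : 0 ≤ α) (hb : 0 < b) (hh : 0 ≤ h) :
    (b + h) ^ (α + 1) ≤ b ^ (α + 1) + (α + 1) * (b + h) ^ α * h := by
  have hp : 0 < b + h := by linarith
  have h1 : (-1:ℝ) ≤ -(h / (b + h)) := by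
    have : h / (b + h) ≤ 1 := by
      rw [div_le_one hp]; linarith
    linarith
  have key := one_add_mul_self_le_rpow_one_add (s := -(h / (b + h))) h1 (p := α + 1) (by linarith)
  have hb1 : (1 + -(h / (b + h))) = b / (b + h) := by field_simp; ring
  have e1 : b ^ (α + 1) = (b + h) ^ (α + 1) * (1 + -(h / (b + h))) ^ (α + 1) := by
    rw [hb1, Real.div_rpow hb.le hp.le, mul_div_cancel₀]
    exact (Real.rpow_pos_of_pos hp _).ne'
  have e2 : (b + h) ^ (α + 1) = (b + h) ^ α * (b + h) := Real.rpow_add_one hp.ne' α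
  have key2 := mul_le_mul_of_nonneg_left key (Real.rpow_pos_of_pos hp (α + 1)).le
  rw [← e1] at key2
  calc (b + h) ^ (α + 1)
      = (b + h) ^ (α + 1) * (1 + (α + 1) * -(h / (b + h))) + (α + 1) * (b + h) ^ α * h := by
        rw [e2]; field_simp; ring
    _ ≤ b ^ (α + 1) + (α + 1) * (b + h) ^ α * h := by linarith

theorem statement3 (α : ℝ) (hα : 2 < α) :
    ∃ θ₀ : ℝ, 0 < θ₀ ∧
      ∀ θ : ℝ, 0 < θ → θ ≤ θ₀ →
        ∃ c C N₀ : ℝ, 0 < c ∧ 0 < C ∧ 1 ≤ N₀ ∧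
          ∀ N : ℝ, N₀ ≤ N →
            ∀ ξ₁ η₁ ξ₂ η₂ : ℝ,
              (ξ₁, η₁) ∈ Dtilde1 α (N ^ (-(α - 1) / 2 - θ)) →
              (ξ₂, η₂) ∈ Dtilde2 α N (N ^ (-(α - 1) / 2 - θ)) →
              c * N ^ (α - 1) * (N ^ (-(α - 1) / 2 - θ)) ^ 2 ≤ |Omega α ξ₁ ξ₂ η₁ η₂| ∧
              |Omega α ξ₁ ξ₂ η₁ η₂| ≤ C * N ^ (α - 1) * (N ^ (-(α - 1) / 2 - θ)) ^ 2 := by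
  refine ⟨1, one_pos, fun θ hθ hθ1 => ?_⟩
  have hα0 : (0:ℝ) < 1 + α := by linarith
  set s : ℝ := Real.sqrt (1 + α) with hs_def
  have hs0 : 0 < s := Real.sqrt_pos.2 hα0
  have hs2 : s ^ 2 = 1 + α := Real.sq_sqrt hα0.le
  have ev2 : ∀ᶠ N : ℝ in atTop, 4 * (2*s+1) ≤ (α+1) * N ^ (α/2) := by
    have ht : Tendsto (fun N : ℝ => (α+1) * N ^ (α/2)) atTop atTop :=
      (tendsto_rpow_atTop (by linarith)).const_mul_atTop (by linarith)
    exact ht.eventually_ge_atTop _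
  have ev3 : ∀ᶠ N : ℝ in atTop, 64 * (1 + 2*s*(s+1) + 4*s^2) ≤ (α+1) * N ^ ((α-2)/2) := by
    have ht : Tendsto (fun N : ℝ => (α+1) * N ^ ((α-2)/2)) atTop atTop :=
      (tendsto_rpow_atTop (by linarith)).const_mul_atTop (by linarith)
    exact ht.eventually_ge_atTop _
  obtain ⟨N₁, hN₁⟩ := Filter.eventually_atTop.mp ((eventually_ge_atTop (2:ℝ)).and (ev2.and ev3))
  refine ⟨(α+1)/64, 2 ^ (α+2) * (α+1) * (α+2) + (α+1), max N₁ 2, by positivity, by positivity,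
    le_trans one_le_two (le_max_right _ _), ?_⟩
  intro N hN ξ₁ η₁ ξ₂ η₂ hm1 hm2
  obtain ⟨hN2, hcond2, hcond3⟩ := hN₁ N (le_trans (le_max_left _ _) hN)
  have hN0 : (0:ℝ) < N := by linarith
  have hN1 : (1:ℝ) ≤ N := by linarith
  set γ : ℝ := N ^ (-(α - 1) / 2 - θ) with hγ_def
  set K : ℝ := N ^ ((α + 2) / 2) with hK_def
  simp only [Dtilde1, Dtilde2, Set.mem_prod, Set.mem_Icc, ← hs_def, ← hK_def] at hm1 hm2
  obtain ⟨⟨ha1, ha2⟩, hη1a, hη1b⟩ := hm1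
  obtain ⟨⟨hb1, hb2⟩, hη2a, hη2b⟩ := hm2
  have hγ0 : 0 < γ := Real.rpow_pos_of_pos hN0 _
  have hγ1 : γ ≤ 1 := Real.rpow_le_one_of_one_le_of_nonpos hN1 (by linarith)
  have hK0 : 0 < K := Real.rpow_pos_of_pos hN0 _
  have hK1 : 1 ≤ K := Real.one_le_rpow hN1 (by linarith)
  have ha0 : 0 < ξ₁ := lt_of_lt_of_le (by positivity) ha1
  have hb0 : 0 < ξ₂ := lt_of_lt_of_le hN0 hb1
  have hp0 : 0 < ξ₁ + ξ₂ := by linarith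
  have hη20 : 0 < η₂ := lt_of_lt_of_le (by positivity) hη2a
  have hNa2_1 : (1:ℝ) ≤ N ^ (α/2) := Real.one_le_rpow hN1 (by linarith)
  -- rpow arithmetic facts
  have hKsq : K^2 = N ^ (α+2) := by
    rw [hK_def, ← Real.rpow_natCast (N ^ ((α+2)/2)) 2, ← Real.rpow_mul hN0.le]
    norm_num
  have hKN : K = N ^ (α/2) * N := by
    rw [hK_def, show (α+2)/2 = α/2 + 1 by ring, Real.rpow_add_one hN0.ne']
  have hNA : N ^ (α-1) * N * N = N ^ (α+1) := by
    rw [← Real.rpow_add_one hN0.ne', ← Real.rpow_add_one hN0.ne']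
    congr 1; ring
  have hNN : N ^ (α+1) * N = N ^ (α+2) := by
    rw [← Real.rpow_add_one hN0.ne']; congr 1; ring
  have hmul : N ^ (α/2) * K = N ^ (α+1) := by
    rw [hK_def, ← Real.rpow_add hN0]; congr 1; ring
  have hmul2 : N ^ ((α-2)/2) * N ^ (α/2) = N ^ (α-1) := by
    rw [← Real.rpow_add hN0]; congr 1; ring
  have hbp : ξ₂ ^ (α+1) = ξ₂ ^ α * ξ₂ := Real.rpow_add_one hb0.ne' α
  have hpp : (ξ₁+ξ₂) ^ (α+1) = (ξ₁+ξ₂) ^ α * (ξ₁+ξ₂) := Real.rpow_add_one hp0.ne' α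
  have hbN : N ^ (α+1) ≤ ξ₂ ^ (α+1) := Real.rpow_le_rpow hN0.le hb1 (by linarith)
  have hγa : ξ₁ ^ (α+1) ≤ γ ^ 2 := by
    calc ξ₁ ^ (α+1) ≤ γ ^ (α+1) := Real.rpow_le_rpow ha0.le ha2 (by linarith)
      _ ≤ γ ^ (2:ℝ) := Real.rpow_le_rpow_of_exponent_ge hγ0 hγ1 (by linarith)
      _ = γ ^ 2 := by rw [← Real.rpow_natCast γ 2]; norm_num
  have haA0 : 0 ≤ ξ₁ ^ (α+1) := Real.rpow_nonneg ha0.le _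
  -- Omega as rpow expression
  have hΩ : Omega α ξ₁ ξ₂ η₁ η₂ =
      ((ξ₁+ξ₂) ^ (α+1) - ξ₁ ^ (α+1) - ξ₂ ^ (α+1))
        - (η₁*ξ₂ - η₂*ξ₁)^2 / (ξ₁*ξ₂*(ξ₁+ξ₂)) := by
    unfold Omega Omega1
    rw [abs_of_pos hp0, abs_of_pos ha0, abs_of_pos hb0,
      Real.rpow_add_one hp0.ne', Real.rpow_add_one ha0.ne', Real.rpow_add_one hb0.ne']
  -- eta bounds
  set m : ℝ := |η₁| with hm_def
  have hm0 : 0 ≤ m := abs_nonneg η₁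
  have hmle : m ≤ s*γ^2 := abs_le.mpr ⟨hη1a, hη1b⟩
  have hmη : η₁ ≤ m := le_abs_self η₁
  have hmη' : -m ≤ η₁ := neg_abs_le η₁
  have hsK2 : (s*K)^2 = (1+α) * N ^ (α+2) := by rw [mul_pow, hs2, hKsq]
  have hη2sq_ub : η₂^2 ≤ (1+α) * N ^ (α+2) + 2*s*K*γ^2 + γ^4 := by
    have h := mul_nonneg (sub_nonneg.2 hη2b) (by positivity : (0:ℝ) ≤ s*K+γ^2+η₂)
    linarith only [h, hsK2]
  have hη2sq_lb : (1+α) * N ^ (α+2) ≤ η₂^2 := by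
    have h := mul_nonneg (sub_nonneg.2 hη2a) (by positivity : (0:ℝ) ≤ s*K+η₂)
    linarith only [h, hsK2]
  -- E1 : error small vs main in X
  have hE1 : 2*s*K*γ^2 + γ^4 ≤ (α+1) * N ^ (α+1) * γ / 4 := by
    have h1 : 4*(2*s+1)*K ≤ (α+1) * N ^ (α+1) := by
      have h2 := mul_le_mul_of_nonneg_right hcond2 hK0.le
      calc 4*(2*s+1)*K ≤ (α+1) * N ^ (α/2) * K := h2
        _ = (α+1) * (N ^ (α/2) * K) := by ring
        _ = (α+1) * N ^ (α+1) := by rw [hmul]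
    have h3 := mul_le_mul_of_nonneg_right h1 hγ0.le
    have h4 : γ^4 ≤ γ := by
      have := pow_le_pow_of_le_one hγ0.le hγ1 (by norm_num : 1 ≤ 4)
      simpa using this
    have hg2 : γ^2 ≤ γ := by
      have := pow_le_pow_of_le_one hγ0.le hγ1 (by norm_num : 1 ≤ 2)
      simpa using this
    have h5 : 2*s*K*γ^2 ≤ 2*s*K*γ :=
      mul_le_mul_of_nonneg_left hg2 (by positivity)
    have h7 : γ ≤ K*γ := by
      have := mul_le_mul_of_nonneg_right hK1 hγ0.le
      linarith
    linarith only [h3, h4, h5, h7]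
  -- lower bound for the main bracket X
  have hprod : N ^ (α+1) * (γ/2 + N) ≤ ξ₂ ^ (α+1) * (ξ₁+ξ₂) :=
    mul_le_mul hbN (by linarith) (by positivity) (by positivity)
  have hX : (α+1) * N ^ (α+1) * γ / 4 ≤ (α+1) * ξ₂ ^ (α+1) * (ξ₁+ξ₂) - η₂^2 := by
    have F1 := mul_le_mul_of_nonneg_left hprod (by linarith : (0:ℝ) ≤ α+1)
    have hNN1 : (α+1)*(N ^ (α+1)*N) = (α+1)*N ^ (α+2) := by rw [hNN]
    linarith only [F1, hNN1, hη2sq_ub, hE1]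
  -- T3 lower bound
  have hbple : ξ₂*(ξ₁+ξ₂) ≤ 4*(N*N) := by
    have e1 : ξ₂ ≤ 2*N := by linarith
    have e2 : ξ₁+ξ₂ ≤ 2*N := by linarith
    have := mul_le_mul e1 e2 (by linarith) (by linarith)
    linarith only [this]
  have hT3 : (α+1)/64 * N ^ (α-1) * γ^2 * 2 ≤
      (α+1) * ξ₂ ^ α * ξ₁ - η₂^2*ξ₁/(ξ₂*(ξ₁+ξ₂)) := by
    have e : (γ/2) * ((α+1) * N ^ (α+1) * γ / 4) / (4*(N*N)) =
        (α+1)/64 * N ^ (α-1) * γ^2 * 2 := by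
      rw [← hNA]; field_simp; ring
    calc (α+1)/64 * N ^ (α-1) * γ^2 * 2
        = (γ/2) * ((α+1) * N ^ (α+1) * γ / 4) / (4*(N*N)) := e.symm
      _ ≤ ξ₁ * ((α+1) * ξ₂ ^ (α+1) * (ξ₁+ξ₂) - η₂^2) / (ξ₂*(ξ₁+ξ₂)) := by
          have hX0 : (0:ℝ) ≤ (α+1) * ξ₂ ^ (α+1) * (ξ₁+ξ₂) - η₂^2 :=
            le_trans (by positivity) hX
          exact div_le_div₀ (mul_nonneg ha0.le hX0)
            (mul_le_mul ha1 hX (by positivity) ha0.le) (by positivity) hbple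
      _ = (α+1) * ξ₂ ^ α * ξ₁ - η₂^2*ξ₁/(ξ₂*(ξ₁+ξ₂)) := by
          rw [hbp]; field_simp
  -- upper bound for the main part U
  have hpb : ξ₁ + ξ₂ ≤ N + 2*γ := by linarith
  have hppow : (ξ₁+ξ₂) ^ (α+1) ≤ (N+2*γ) ^ (α+1) := Real.rpow_le_rpow hp0.le hpb (by linarith)
  have h2N : (N+2*γ) ^ (α+1) ≤ 2 ^ (α+1) * N ^ (α+1) := by
    calc (N+2*γ) ^ (α+1) ≤ (2*N) ^ (α+1) :=
          Real.rpow_le_rpow (by linarith) (by linarith) (by linarith)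
      _ = 2 ^ (α+1) * N ^ (α+1) := Real.mul_rpow (by norm_num) hN0.le
  have hq : (N+2*γ) ^ (α+1) * (N+2*γ) = (N+2*γ) ^ (α+2) := by
    rw [← Real.rpow_add_one (by positivity : (N+2*γ) ≠ 0)]; congr 1; ring
  have hY1 : (ξ₁+ξ₂) ^ (α+1) * ξ₂ ≤ (N+2*γ) ^ (α+2) := by
    rw [← hq]
    exact mul_le_mul hppow (by linarith) hb0.le (by positivity)
  have htub := taylor_ub (α+1) N (2*γ) (by linarith) hN0 (by positivity)
  have htub' : (N+2*γ) ^ (α+2) ≤ N ^ (α+2) + (α+2) * (N+2*γ) ^ (α+1) * (2*γ) := by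
    rw [show α+2 = α+1+1 by ring]
    exact htub
  have hY2 : (N+2*γ) ^ (α+2) - N ^ (α+2) ≤ (α+2) * (2 ^ (α+1) * N ^ (α+1)) * (2*γ) := by
    have h5 := mul_le_mul_of_nonneg_right
      (mul_le_mul_of_nonneg_left h2N (by linarith : (0:ℝ) ≤ α+2))
      (by positivity : (0:ℝ) ≤ 2*γ)
    linarith
  have hYub : (α+1) * ((ξ₁+ξ₂) ^ (α+1) * ξ₂) - η₂^2 ≤
      2*(α+2)*(α+1)*γ*(2 ^ (α+1) * N ^ (α+1)) := by
    have F1 := mul_le_mul_of_nonneg_left hY1 (by linarith : (0:ℝ) ≤ α+1)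
    have F2 := mul_le_mul_of_nonneg_left hY2 (by linarith : (0:ℝ) ≤ α+1)
    linarith only [F1, F2, hη2sq_lb]
  have hY00 : (0:ℝ) ≤ 2*(α+2)*(α+1)*γ*(2 ^ (α+1) * N ^ (α+1)) := by positivity
  have hNsq : N*N ≤ ξ₂*(ξ₁+ξ₂) :=
    mul_le_mul hb1 (by linarith) hN0.le hb0.le
  have hU : (α+1) * (ξ₁+ξ₂) ^ α * ξ₁ - η₂^2*ξ₁/(ξ₂*(ξ₁+ξ₂)) ≤
      2 ^ (α+2) * (α+1) * (α+2) * N ^ (α-1) * γ^2 := by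
    have e1 : (α+1) * (ξ₁+ξ₂) ^ α * ξ₁ - η₂^2*ξ₁/(ξ₂*(ξ₁+ξ₂)) =
        ξ₁ * ((α+1) * ((ξ₁+ξ₂) ^ (α+1) * ξ₂) - η₂^2) / (ξ₂*(ξ₁+ξ₂)) := by
      rw [hpp]; field_simp
    have e2 : γ * (2*(α+2)*(α+1)*γ*(2 ^ (α+1) * N ^ (α+1))) / (N*N) =
        2 ^ (α+2) * (α+1) * (α+2) * N ^ (α-1) * γ^2 := by
      rw [← hNA, show (2:ℝ) ^ (α+2) = 2 ^ (α+1) * 2 by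
        rw [← Real.rpow_add_one (by norm_num : (2:ℝ) ≠ 0)]; congr 1; ring]
      field_simp
    rw [e1, ← e2]
    have num_le : ξ₁ * ((α+1) * ((ξ₁+ξ₂) ^ (α+1) * ξ₂) - η₂^2) ≤
        γ * (2*(α+2)*(α+1)*γ*(2 ^ (α+1) * N ^ (α+1))) := by
      have F1 := mul_le_mul_of_nonneg_left hYub ha0.le
      have F2 := mul_le_mul_of_nonneg_right ha2 hY00
      linarith only [F1, F2]
    calc ξ₁ * ((α+1) * ((ξ₁+ξ₂) ^ (α+1) * ξ₂) - η₂^2) / (ξ₂*(ξ₁+ξ₂))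
        ≤ γ * (2*(α+2)*(α+1)*γ*(2 ^ (α+1) * N ^ (α+1))) / (ξ₂*(ξ₁+ξ₂)) :=
          (div_le_div_iff_of_pos_right (by positivity)).mpr num_le
      _ ≤ γ * (2*(α+2)*(α+1)*γ*(2 ^ (α+1) * N ^ (α+1))) / (N*N) :=
          div_le_div₀ (by positivity) le_rfl (by positivity) hNsq
  -- B bounds
  have hcross : 2*m*η₂/(ξ₁+ξ₂) ≤ 2*(s*γ^2)*(s*K+γ^2)/N :=
    div_le_div₀ (by positivity)
      (mul_le_mul (by linarith only [hmle] : 2*m ≤ 2*(s*γ^2)) hη2b hη20.le (by positivity))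
      hN0 (by linarith)
  have hBub : (η₁*ξ₂ - η₂*ξ₁)^2/(ξ₁*ξ₂*(ξ₁+ξ₂)) ≤
      η₂^2*ξ₁/(ξ₂*(ξ₁+ξ₂)) + (2*(s*γ^2)*(s*K+γ^2)/N + 4*s^2*γ^3) := by
    have key : (η₁*ξ₂ - η₂*ξ₁)^2 ≤ (η₂*ξ₁ + m*ξ₂)^2 := by
      have t1 : -m*ξ₂ ≤ η₁*ξ₂ := mul_le_mul_of_nonneg_right hmη' hb0.le
      have t2 : η₁*ξ₂ ≤ m*ξ₂ := mul_le_mul_of_nonneg_right hmη hb0.le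
      have t3 : (0:ℝ) ≤ η₂*ξ₁ := by positivity
      exact sq_le_sq' (by linarith only [t1, t3]) (by linarith only [t2, t3])
    have step1 : (η₁*ξ₂ - η₂*ξ₁)^2/(ξ₁*ξ₂*(ξ₁+ξ₂)) ≤ (η₂*ξ₁ + m*ξ₂)^2/(ξ₁*ξ₂*(ξ₁+ξ₂)) :=
      (div_le_div_iff_of_pos_right (by positivity)).mpr key
    have step2 : (η₂*ξ₁ + m*ξ₂)^2/(ξ₁*ξ₂*(ξ₁+ξ₂)) =
        η₂^2*ξ₁/(ξ₂*(ξ₁+ξ₂)) + 2*m*η₂/(ξ₁+ξ₂) + m^2*ξ₂/(ξ₁*(ξ₁+ξ₂)) := by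
      field_simp; ring
    have step4 : m^2*ξ₂/(ξ₁*(ξ₁+ξ₂)) ≤ 4*s^2*γ^3 := by
      have e : (s*γ^2)^2*(2*N)/((γ/2)*N) = 4*s^2*γ^3 := by field_simp; ring
      calc m^2*ξ₂/(ξ₁*(ξ₁+ξ₂)) ≤ (s*γ^2)^2*(2*N)/((γ/2)*N) :=
            div_le_div₀ (by positivity)
              (mul_le_mul (pow_le_pow_left₀ hm0 hmle 2) (by linarith : ξ₂ ≤ 2*N)
                hb0.le (by positivity))
              (by positivity)
              (mul_le_mul ha1 (by linarith : N ≤ ξ₁+ξ₂) hN0.le ha0.le)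
        _ = 4*s^2*γ^3 := e
    linarith only [step1, step2, hcross, step4]
  have hBlb : η₂^2*ξ₁/(ξ₂*(ξ₁+ξ₂)) - (2*(s*γ^2)*(s*K+γ^2)/N + 4*s^2*γ^3) ≤
      (η₁*ξ₂ - η₂*ξ₁)^2/(ξ₁*ξ₂*(ξ₁+ξ₂)) := by
    have key : η₂^2*ξ₁^2 - 2*m*η₂*ξ₁*ξ₂ ≤ (η₁*ξ₂ - η₂*ξ₁)^2 := by
      have t4 : (0:ℝ) ≤ (m-η₁)*(η₂*(ξ₁*ξ₂)) :=
        mul_nonneg (by linarith only [hmη]) (by positivity)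
      linarith only [t4, sq_nonneg (η₁*ξ₂)]
    have step1 : (η₂^2*ξ₁^2 - 2*m*η₂*ξ₁*ξ₂)/(ξ₁*ξ₂*(ξ₁+ξ₂)) ≤
        (η₁*ξ₂ - η₂*ξ₁)^2/(ξ₁*ξ₂*(ξ₁+ξ₂)) :=
      (div_le_div_iff_of_pos_right (by positivity)).mpr key
    have step2 : (η₂^2*ξ₁^2 - 2*m*η₂*ξ₁*ξ₂)/(ξ₁*ξ₂*(ξ₁+ξ₂)) =
        η₂^2*ξ₁/(ξ₂*(ξ₁+ξ₂)) - 2*m*η₂/(ξ₁+ξ₂) := by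
      field_simp
    have h4 : (0:ℝ) ≤ 4*s^2*γ^3 := by positivity
    linarith only [step1, step2, hcross, h4]
  -- error terms bound
  have hR1 : 2*(s*γ^2)*(s*K+γ^2)/N ≤ 2*s*(s+1) * (N ^ (α/2) * γ^2) := by
    have e : 2*(s*γ^2)*((s+1)*K)/N = 2*s*(s+1) * (N ^ (α/2) * γ^2) := by
      rw [hKN]; field_simp
    have hg2 : γ^2 ≤ 1 := by
      have : γ^2 ≤ 1^2 := pow_le_pow_left₀ hγ0.le hγ1 2
      simpa using this
    calc 2*(s*γ^2)*(s*K+γ^2)/N ≤ 2*(s*γ^2)*((s+1)*K)/N :=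
          (div_le_div_iff_of_pos_right hN0).mpr
            (mul_le_mul_of_nonneg_left (by linarith only [hg2, hK1] : s*K+γ^2 ≤ (s+1)*K)
              (by positivity))
      _ = 2*s*(s+1) * (N ^ (α/2) * γ^2) := e
  have hg1 : (1:ℝ)*γ^2 ≤ N ^ (α/2) * γ^2 := mul_le_mul_of_nonneg_right hNa2_1 (sq_nonneg γ)
  have hR2 : 4*s^2*γ^3 ≤ 4*s^2 * (N ^ (α/2) * γ^2) := by
    have g32 : γ^3 ≤ γ^2 := pow_le_pow_of_le_one hγ0.le hγ1 (by norm_num)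
    have F1 := mul_le_mul_of_nonneg_left g32 (by positivity : (0:ℝ) ≤ 4*s^2)
    have F2 := mul_le_mul_of_nonneg_left hg1 (by positivity : (0:ℝ) ≤ 4*s^2)
    linarith only [F1, F2]
  have hT2' : ξ₁ ^ (α+1) ≤ N ^ (α/2) * γ^2 := by
    linarith only [hγa, hg1]
  have hM : (1 + 2*s*(s+1) + 4*s^2) * (N ^ (α/2) * γ^2) ≤ (α+1) * N ^ (α-1) * γ^2 / 64 := by
    have h := mul_le_mul_of_nonneg_right hcond3 (by positivity : (0:ℝ) ≤ N ^ (α/2) * γ^2)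
    calc (1 + 2*s*(s+1) + 4*s^2) * (N ^ (α/2) * γ^2)
        = 64*(1 + 2*s*(s+1) + 4*s^2) * (N ^ (α/2) * γ^2) / 64 := by ring
      _ ≤ (α+1) * N ^ ((α-2)/2) * (N ^ (α/2) * γ^2) / 64 := by linarith
      _ = (α+1) * N ^ (α-1) * γ^2 / 64 := by
          rw [show (α+1) * N ^ ((α-2)/2) * (N ^ (α/2) * γ^2) =
            (α+1) * (N ^ ((α-2)/2) * N ^ (α/2)) * γ^2 by ring, hmul2]
  -- Taylor bounds for the dispersive part
  have htlb := taylor_lb α ξ₂ ξ₁ (by linarith) hb0 ha0.le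
  have htub2 := taylor_ub α ξ₂ ξ₁ (by linarith) hb0 ha0.le
  rw [show ξ₂ + ξ₁ = ξ₁ + ξ₂ by ring] at htlb htub2
  -- final assembly
  have hlow : (α+1)/64 * N ^ (α-1) * γ^2 ≤ Omega α ξ₁ ξ₂ η₁ η₂ := by
    rw [hΩ]
    linarith only [htlb, hT3, hBub, hR1, hR2, hT2', hM]
  have hup : Omega α ξ₁ ξ₂ η₁ η₂ ≤ (2 ^ (α+2) * (α+1) * (α+2) + (α+1)) * N ^ (α-1) * γ^2 := by
    rw [hΩ]
    have hpos2 : (0:ℝ) ≤ (α+1) * N ^ (α-1) * γ^2 / 64 := by positivity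
    have hNγ : (0:ℝ) ≤ N ^ (α/2) * γ^2 := by positivity
    linarith only [htub2, hU, hBlb, hR1, hR2, hM, haA0, hpos2, hNγ]
  have habs : 0 ≤ Omega α ξ₁ ξ₂ η₁ η₂ := le_trans (by positivity) hlow
  rw [abs_of_nonneg habs]
  exact ⟨hlow, hup⟩
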